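/- A non-root vertex v of a DFS tree T of a connected undirected graph G is an articulation point of G if and only if v has a child c in T such that no edge of G connects a vertex of T(c) to a proper ancestor of v. -/

import Mathlib

/-- `u` is an ancestor of `v` with respect to the parent function `par`
(every vertex is an ancestor of itself). -/
def IsAncestor {V : Type*} (par : V → V) (u v : V) : Prop := ∃ n : ℕ, par^[n] v = u

/-- A spanning tree of `G` rooted at `r`, given by a parent function:
the root is its own parent, every vertex reaches the root by iterating
the parent function, and each non-root vertex is adjacent to its parent. -/
structure RootedSpanningTree {V : Type*} (G : SimpleGraph V) (r : V) where
  par : V → V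
  par_root : par r = r
  reaches_root : ∀ v, ∃ n : ℕ, par^[n] v = r
  adj_par : ∀ v, v ≠ r → G.Adj (par v) v

/-- Every edge of `G` joins two vertices in ancestor-descendant relation
in the tree, i.e. there are no cross edges (all non-tree edges are back edges). -/
def RootedSpanningTree.noCrossEdges {V : Type*} {G : SimpleGraph V} {r : V}
    (T : RootedSpanningTree G r) : Prop :=
  ∀ u v, G.Adj u v → IsAncestor T.par u v ∨ IsAncestor T.par v u

/-- `v` lies on the ancestor-descendant tree path from `x` down to `y`
(where `x` is an ancestor of `y`). -/
def OnTreePath {V : Type*} (par : V → V) (x y v : V) : Prop :=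
  IsAncestor par x v ∧ IsAncestor par v y

section Aux

variable {V : Type*}

lemma aux_iter_fix (par : V → V) {r : V} (h : par r = r) (n : ℕ) : par^[n] r = r :=
  Function.iterate_fixed h n

/-- If `w` lies on a nontrivial `par`-cycle and reaches `r` (with `par r = r`), then `w = r`. -/
lemma aux_no_cycle {par : V → V} {r w : V} (hr : par r = r)
    (hN : ∃ N, par^[N] w = r) {k : ℕ} (hk : 1 ≤ k) (hc : par^[k] w = w) : w = r := by
  obtain ⟨N, hN⟩ := hN
  have hkn : ∀ n, par^[k * n] w = w := by
    intro n
    induction n with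
    | zero => simp
    | succ n ih => rw [Nat.mul_succ, Function.iterate_add_apply, hc, ih]
  have hge : N ≤ k * N := Nat.le_mul_of_pos_left N hk
  have h1 : par^[k * N] w = r := by
    rw [← Nat.sub_add_cancel hge, Function.iterate_add_apply, hN, aux_iter_fix par hr]
  rw [hkn N] at h1; exact h1

lemma aux_anc_trans {par : V → V} {u w z : V} (h1 : IsAncestor par u w)
    (h2 : IsAncestor par w z) : IsAncestor par u z := by
  obtain ⟨m, hm⟩ := h1; obtain ⟨n, hn⟩ := h2
  exact ⟨m + n, by rw [Function.iterate_add_apply, hn, hm]⟩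

/-- Two ancestors of a common vertex are comparable. -/
lemma aux_anc_total {par : V → V} {a b c : V} (hb : IsAncestor par b a)
    (hc : IsAncestor par c a) : IsAncestor par b c ∨ IsAncestor par c b := by
  obtain ⟨j, hj⟩ := hb; obtain ⟨k, hk⟩ := hc
  rcases le_total j k with h | h
  · right
    exact ⟨k - j, by rw [← hj, ← Function.iterate_add_apply, Nat.sub_add_cancel h]; exact hk⟩
  · left
    exact ⟨j - k, by rw [← hk, ← Function.iterate_add_apply, Nat.sub_add_cancel h]; exact hj⟩

variable {G : SimpleGraph V} {r : V}

/-- Walking up the tree from `w`, as long as we do not meet `v`, stays connected in `G − v`. -/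
lemma aux_path_up (T : RootedSpanningTree G r) (v w : V) (n : ℕ)
    (h : ∀ i, i ≤ n → T.par^[i] w ≠ v) :
    Relation.ReflTransGen (fun a b => G.Adj a b ∧ a ≠ v ∧ b ≠ v) w (T.par^[n] w) := by
  induction n with
  | zero => exact .refl
  | succ n ih =>
    have ih' := ih (fun i hi => h i (Nat.le_succ_of_le hi))
    by_cases hr : T.par^[n] w = r
    · have heq : T.par^[n+1] w = T.par^[n] w := by
        rw [Function.iterate_succ_apply', hr, T.par_root]
      rw [heq]; exact ih'
    · refine ih'.tail ⟨?_, h n (Nat.le_succ n), h (n+1) le_rfl⟩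
      rw [Function.iterate_succ_apply']
      exact (T.adj_par _ hr).symm

/-- If `v` is not an ancestor of `w`, then `w` is connected to `r` in `G − v`. -/
lemma aux_conn_root (T : RootedSpanningTree G r) {v w : V} (h : ¬ IsAncestor T.par v w) :
    Relation.ReflTransGen (fun a b => G.Adj a b ∧ a ≠ v ∧ b ≠ v) w r := by
  obtain ⟨N, hN⟩ := T.reaches_root w
  have := aux_path_up T v w N (fun i _ hiv => h ⟨i, hiv⟩)
  rwa [hN] at this

/-- A child `c` of `v` which is not connected to `r` in `G − v` has no edge from its
subtree to a proper ancestor of `v`. -/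
lemma aux_good (T : RootedSpanningTree G r) (hT : T.noCrossEdges) {v c : V} (hv : v ≠ r)
    (hc : T.par c = v)
    (hnc : ¬ Relation.ReflTransGen (fun a b => G.Adj a b ∧ a ≠ v ∧ b ≠ v) c r) :
    ∀ a b : V, IsAncestor T.par c a → G.Adj a b →
      ¬ (IsAncestor T.par b v ∧ b ≠ v) := by
  intro a b hca hab hand
  obtain ⟨hbv, hbne⟩ := hand
  apply hnc
  have hsymm : Symmetric (fun a b => G.Adj a b ∧ a ≠ v ∧ b ≠ v) :=
    fun x y ⟨h1, h2, h3⟩ => ⟨h1.symm, h3, h2⟩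
  have hvr : ∀ k, 1 ≤ k → T.par^[k] v = v → False := fun k hk hcyc =>
    hv (aux_no_cycle T.par_root (T.reaches_root v) hk hcyc)
  obtain ⟨m, hm⟩ := hca
  -- the tree path from `a` up to `c` avoids `v`
  have key : ∀ i, i ≤ m → T.par^[i] a ≠ v := by
    intro i him hiv
    have hcv : T.par^[m - i] v = c := by
      rw [← hiv, ← Function.iterate_add_apply, Nat.sub_add_cancel him]; exact hm
    have hcyc : T.par^[m - i + 1] v = v := by
      rw [Function.iterate_succ_apply', hcv, hc]
    exact hvr (m - i + 1) (by omega) hcyc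
  have hac : Relation.ReflTransGen (fun a b => G.Adj a b ∧ a ≠ v ∧ b ≠ v) a c := by
    have := aux_path_up T v a m key
    rwa [hm] at this
  have hav : a ≠ v := by simpa using key 0 (Nat.zero_le m)
  -- `b` is a proper ancestor of `v`, so `v` is not an ancestor of `b`
  have hbr : Relation.ReflTransGen (fun a b => G.Adj a b ∧ a ≠ v ∧ b ≠ v) b r := by
    apply aux_conn_root T
    rintro ⟨i, hib⟩
    obtain ⟨k, hkv⟩ := hbv
    rcases Nat.eq_zero_or_pos i with h0 | h0
    · have hb0 : b = v := by simpa [h0] using hib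
      exact hbne hb0
    · exact hvr (i + k) (by omega) (by rw [Function.iterate_add_apply, hkv, hib])
  exact (((@Relation.ReflTransGen.stdSymm _ _ ⟨fun _ _ h => hsymm h⟩).symm _ _ hac).trans
    (Relation.ReflTransGen.single ⟨hab, hav, hbne⟩)).trans hbr

end Aux

/-- A non-root vertex `v` of a DFS tree `T` of a connected graph `G` is an
articulation point (there are vertices `x, y ≠ v` not connected in `G − v`)
if and only if `v` has a child `c` in `T` such that no edge of `G` joins a
vertex of the subtree `T(c)` to a proper ancestor of `v`. -/
theorem articulation_point_iff {V : Type*} (G : SimpleGraph V)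
    (hG : G.Connected) (r : V) (T : RootedSpanningTree G r)
    (hT : T.noCrossEdges) (v : V) (hv : v ≠ r) :
    (∃ x y : V, x ≠ v ∧ y ≠ v ∧
      ¬ Relation.ReflTransGen (fun a b => G.Adj a b ∧ a ≠ v ∧ b ≠ v) x y) ↔
    (∃ c : V, T.par c = v ∧ c ≠ r ∧
      ∀ a b : V, IsAncestor T.par c a → G.Adj a b →
        ¬ (IsAncestor T.par b v ∧ b ≠ v)) := by
  classical
  have hsymm : Symmetric (fun a b => G.Adj a b ∧ a ≠ v ∧ b ≠ v) :=
    fun x y ⟨h1, h2, h3⟩ => ⟨h1.symm, h3, h2⟩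
  have hvr : ∀ k, 1 ≤ k → T.par^[k] v = v → False := fun k hk hcyc =>
    hv (aux_no_cycle T.par_root (T.reaches_root v) hk hcyc)
  have hne_r : ∀ c : V, T.par c = v → c ≠ r := by
    intro c hc hcr
    exact hv (by rw [hcr, T.par_root] at hc; exact hc.symm)
  constructor
  · rintro ⟨x, y, hx, hy, hxy⟩
    -- classify each vertex ≠ v
    have classify : ∀ w : V, w ≠ v →
        Relation.ReflTransGen (fun a b => G.Adj a b ∧ a ≠ v ∧ b ≠ v) w r ∨
        ∃ c, T.par c = v ∧
          Relation.ReflTransGen (fun a b => G.Adj a b ∧ a ≠ v ∧ b ≠ v) w c := by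
      intro w hw
      by_cases hvw : IsAncestor T.par v w
      · right
        have hex : ∃ k, T.par^[k] w = v := hvw
        have hk : T.par^[Nat.find hex] w = v := Nat.find_spec hex
        have hk1 : 1 ≤ Nat.find hex := by
          rcases Nat.eq_zero_or_pos (Nat.find hex) with h0 | h0
          · exact absurd (by simpa [h0] using hk) hw
          · exact h0
        refine ⟨T.par^[Nat.find hex - 1] w, ?_, ?_⟩
        · refine (Function.iterate_succ_apply' T.par (Nat.find hex - 1) w).symm.trans ?_
          rw [Nat.succ_eq_add_one, Nat.sub_add_cancel hk1]
          exact hk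
        · exact aux_path_up T v w (Nat.find hex - 1)
            (fun i hi hiv => Nat.find_min hex (by omega) hiv)
      · left; exact aux_conn_root T hvw
    rcases classify x hx with hxr | ⟨c₁, hc₁, hxc₁⟩
    · rcases classify y hy with hyr | ⟨c₂, hc₂, hyc₂⟩
      · exact absurd (hxr.trans ((@Relation.ReflTransGen.stdSymm _ _ ⟨fun _ _ h => hsymm h⟩).symm _ _ hyr)) hxy
      · refine ⟨c₂, hc₂, hne_r _ hc₂, aux_good T hT hv hc₂ ?_⟩
        intro h
        exact hxy (hxr.trans ((@Relation.ReflTransGen.stdSymm _ _ ⟨fun _ _ h => hsymm h⟩).symm _ _ (hyc₂.trans h)))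
    · rcases classify y hy with hyr | ⟨c₂, hc₂, hyc₂⟩
      · refine ⟨c₁, hc₁, hne_r _ hc₁, aux_good T hT hv hc₁ ?_⟩
        intro h
        exact hxy ((hxc₁.trans h).trans ((@Relation.ReflTransGen.stdSymm _ _ ⟨fun _ _ h => hsymm h⟩).symm _ _ hyr))
      · by_cases h1 : Relation.ReflTransGen (fun a b => G.Adj a b ∧ a ≠ v ∧ b ≠ v) c₁ r
        · refine ⟨c₂, hc₂, hne_r _ hc₂, aux_good T hT hv hc₂ ?_⟩
          intro h2
          exact hxy ((hxc₁.trans h1).trans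
            ((@Relation.ReflTransGen.stdSymm _ _ ⟨fun _ _ h => hsymm h⟩).symm _ _ (hyc₂.trans h2)))
        · exact ⟨c₁, hc₁, hne_r _ hc₁, aux_good T hT hv hc₁ h1⟩
  · rintro ⟨c, hc, hcr, hprop⟩
    have hcv : c ≠ v := by
      intro h
      subst h
      exact hvr 1 le_rfl (by simpa using hc)
    refine ⟨c, r, hcv, fun h => hv h.symm, ?_⟩
    intro hconn
    -- every vertex connected to c in G − v lies in the subtree of c
    have hsub : ∀ z : V,
        Relation.ReflTransGen (fun a b => G.Adj a b ∧ a ≠ v ∧ b ≠ v) c z →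
        IsAncestor T.par c z := by
      intro z hz
      induction hz with
      | refl => exact ⟨0, rfl⟩
      | tail hcb hstep ih =>
        rename_i b' z'
        obtain ⟨hadj, hb'v, hz'v⟩ := hstep
        rcases hT b' z' hadj with h1 | h2
        · exact aux_anc_trans ih h1
        · rcases aux_anc_total h2 ih with h3 | h4
          · -- z' is an ancestor of c
            obtain ⟨n, hn⟩ := h3
            rcases Nat.eq_zero_or_pos n with h0 | h0
            · exact ⟨0, by simpa [h0] using hn.symm⟩
            · exfalso
              apply hprop b' z' ih hadj
              refine ⟨⟨n - 1, ?_⟩, hz'v⟩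
              have : T.par^[n] c = T.par^[n-1] v := by
                conv_lhs => rw [← Nat.sub_add_cancel h0]
                rw [Function.iterate_succ_apply, hc]
              rw [← this]; exact hn
          · exact h4
    obtain ⟨n, hn⟩ := hsub r hconn
    rw [aux_iter_fix T.par T.par_root] at hn
    exact hcr hn.symm
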